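/- In a locally finite digraph, for a ray or anti-ray R₁ and a ray or anti-ray R₂: there exist infinitely many pairwise disjoint directed R₁-R₂ paths if and only if for every vertex x and every r ∈ ℕ there is a directed R₁-R₂ path avoiding B⁺_r(x) ∪ B⁻_r(x). -/
import Mathlib


open Set
open scoped ENNReal NNReal

section Digraph

variable {V : Type*}

def IsWalk (E : V → V → Prop) (n : ℕ) (p : Fin (n+1) → V) : Prop :=
  ∀ i : Fin n, E (p i.castSucc) (p i.succ)

noncomputable def ddist (E : V → V → Prop) (x y : V) : ℝ≥0∞ :=
  sInf {m : ℝ≥0∞ | ∃ (n : ℕ) (p : Fin (n+1) → V),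
    IsWalk E n p ∧ p 0 = x ∧ p (Fin.last n) = y ∧ m = n}

def outBallD (E : V → V → Prop) (x : V) (r : ℝ≥0∞) : Set V := {y | ddist E x y ≤ r}
def inBallD (E : V → V → Prop) (x : V) (r : ℝ≥0∞) : Set V := {y | ddist E y x ≤ r}

def IsRayD (E : V → V → Prop) (r : ℕ → V) : Prop :=
  Function.Injective r ∧ ∀ i, E (r i) (r (i+1))

def IsAntiRayD (E : V → V → Prop) (r : ℕ → V) : Prop :=
  Function.Injective r ∧ ∀ i, E (r (i+1)) (r i)

/-- `S` is the vertex set of some directed path starting in `A` and ending in `B`. -/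
def IsPathFromTo (E : V → V → Prop) (A B : Set V) (S : Set V) : Prop :=
  ∃ (n : ℕ) (p : Fin (n+1) → V), IsWalk E n p ∧
    p 0 ∈ A ∧ p (Fin.last n) ∈ B ∧ S = Set.range p

/-- There exist infinitely many pairwise disjoint directed `A`-`B` paths. -/
def InfDisjPaths (E : V → V → Prop) (A B : Set V) : Prop :=
  ∃ F : ℕ → Set V, (∀ k, IsPathFromTo E A B (F k)) ∧
    ∀ k l, k ≠ l → Disjoint (F k) (F l)

end Digraph

section Aux
variable {V : Type*}

-- auxiliary: ℕ-indexed walks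
def NWalk (E : V → V → Prop) (n : ℕ) (q : ℕ → V) : Prop := ∀ i < n, E (q i) (q (i+1))

def Rch (E : V → V → Prop) (m : ℕ) (x y : V) : Prop :=
  ∃ q : ℕ → V, NWalk E m q ∧ q 0 = x ∧ q m = y

lemma rch_refl (E : V → V → Prop) (x : V) : Rch E 0 x x :=
  ⟨fun _ => x, fun i h => absurd h (Nat.not_lt_zero i), rfl, rfl⟩

lemma rch_concat {E : V → V → Prop} {m k : ℕ} {x y z : V}
    (h1 : Rch E m x y) (h2 : Rch E k y z) : Rch E (m + k) x z := by
  obtain ⟨q1, hw1, h10, h1m⟩ := h1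
  obtain ⟨q2, hw2, h20, h2k⟩ := h2
  refine ⟨fun i => if i < m then q1 i else q2 (i - m), ?_, ?_, ?_⟩
  · intro i hi
    by_cases h : i < m
    · by_cases h' : i + 1 < m
      · simpa [h, h'] using hw1 i h
      · have hi1 : i + 1 = m := by omega
        have : q2 (i + 1 - m) = q1 (i + 1) := by
          rw [hi1, Nat.sub_self, h20, ← h1m]
        simp only [h, if_pos, if_neg h', this]
        exact hw1 i h
    · have h' : ¬ (i + 1 < m) := by omega
      have harith : i + 1 - m = (i - m) + 1 := by omega
      simp only [if_neg h, if_neg h', harith]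
      exact hw2 (i - m) (by omega)
  · by_cases h : 0 < m
    · simpa [h] using h10
    · have hm : m = 0 := by omega
      subst hm
      simp only [if_neg h, Nat.sub_self]
      rw [h20, ← h1m]
      exact h10
  · have : ¬ (m + k < m) := by omega
    simp only [if_neg this, Nat.add_sub_cancel_left, h2k]

lemma rch_flip {E : V → V → Prop} {m : ℕ} {x y : V} (h : Rch E m x y) :
    Rch (fun a b => E b a) m y x := by
  obtain ⟨q, hw, h0, hm⟩ := h
  refine ⟨fun i => q (m - i), ?_, by simp [hm], by simp [h0]⟩
  intro i hi
  have harith : m - (i + 1) + 1 = m - i := by omega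
  have := hw (m - (i + 1)) (by omega)
  rw [harith] at this
  exact this

-- walks: Fin version to ℕ version
lemma rch_of_finwalk {E : V → V → Prop} {n : ℕ} {p : Fin (n+1) → V}
    (hp : IsWalk E n p) {j : ℕ} (hj : j ≤ n) :
    Rch E j (p 0) (p ⟨j, Nat.lt_succ_of_le hj⟩) := by
  refine ⟨fun i => p ⟨min i n, Nat.lt_succ_of_le (min_le_right i n)⟩, ?_, ?_, ?_⟩
  · intro i hi
    have hi' : i < n := lt_of_lt_of_le hi hj
    have h1 : min i n = i := min_eq_left hi'.le
    have h2 : min (i+1) n = i + 1 := min_eq_left hi'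
    convert hp ⟨i, hi'⟩ using 2
    · exact Fin.ext (by simp [h1])
    · exact Fin.ext (by simp [h2])
  · refine congrArg p (Fin.ext ?_); simp
  · refine congrArg p (Fin.ext ?_); simp [min_eq_left hj, Fin.last]

lemma mem_ddist_set_of_rch {E : V → V → Prop} {m : ℕ} {x y : V} (h : Rch E m x y) :
    (m : ℝ≥0∞) ∈ {μ : ℝ≥0∞ | ∃ (n : ℕ) (p : Fin (n+1) → V),
      IsWalk E n p ∧ p 0 = x ∧ p (Fin.last n) = y ∧ μ = n} := by
  obtain ⟨q, hw, h0, hm⟩ := h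
  refine ⟨m, fun i => q i.val, ?_, ?_, ?_, rfl⟩
  · intro i
    have := hw i.val i.isLt
    simpa using this
  · simpa using h0
  · simpa [Fin.last] using hm

lemma ddist_le_of_rch {E : V → V → Prop} {m : ℕ} {x y : V} (h : Rch E m x y) :
    ddist E x y ≤ m := sInf_le (mem_ddist_set_of_rch h)

lemma ddist_le_iff {E : V → V → Prop} {x y : V} {n : ℕ} :
    ddist E x y ≤ (n : ℝ≥0∞) ↔ ∃ m ≤ n, Rch E m x y := by
  constructor
  · intro h
    by_contra hc
    push_neg at hc
    have hge : (n : ℝ≥0∞) + 1 ≤ ddist E x y := by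
      apply le_sInf
      rintro μ ⟨k, p, hw, h0, hl, rfl⟩
      have hrch : Rch E k x y := by
        have := rch_of_finwalk hw (le_refl k)
        rw [h0] at this
        have e : (⟨k, Nat.lt_succ_of_le (le_refl k)⟩ : Fin (k+1)) = Fin.last k := rfl
        rw [e, hl] at this
        exact this
      have hk : n < k := by
        by_contra hk'
        exact hc k (by omega) hrch
      calc (n : ℝ≥0∞) + 1 = ((n + 1 : ℕ) : ℝ≥0∞) := by push_cast; ring
        _ ≤ (k : ℝ≥0∞) := by exact_mod_cast hk
    have : (n : ℝ≥0∞) + 1 ≤ (n : ℝ≥0∞) := hge.trans h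
    exact absurd this (not_le.mpr (ENNReal.lt_add_right (by simp) one_ne_zero))
  · rintro ⟨m, hm, hr⟩
    exact (ddist_le_of_rch hr).trans (by exact_mod_cast hm)

lemma ball_finite {E : V → V → Prop}
    (hlf : ∀ x : V, {y : V | E x y}.Finite ∧ {y : V | E y x}.Finite) (x : V) :
    ∀ n : ℕ, {y : V | ∃ m ≤ n, Rch E m x y}.Finite := by
  intro n
  induction n with
  | zero =>
    apply Set.Finite.subset (Set.finite_singleton x)
    rintro y ⟨m, hm, q, hw, h0, hml⟩
    interval_cases m
    simp only [Set.mem_singleton_iff]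
    rw [← hml, ← h0]
  | succ n ih =>
    apply Set.Finite.subset (ih.union (ih.biUnion (fun z _ => (hlf z).1)))
    rintro y ⟨m, hm, q, hw, h0, hml⟩
    match m with
    | 0 =>
      left
      exact ⟨0, Nat.zero_le n, q, hw, h0, hml⟩
    | m' + 1 =>
      right
      refine Set.mem_biUnion (⟨m', by omega, q, fun i hi => hw i (by omega), h0, rfl⟩ :
        q m' ∈ {y | ∃ m ≤ n, Rch E m x y}) ?_
      have := hw m' (Nat.lt_succ_self m')
      rw [hml] at this
      exact this

lemma inball_finite {E : V → V → Prop}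
    (hlf : ∀ x : V, {y : V | E x y}.Finite ∧ {y : V | E y x}.Finite) (x : V) (n : ℕ) :
    {y : V | ∃ m ≤ n, Rch E m y x}.Finite := by
  have := ball_finite (E := fun a b => E b a) (fun z => ⟨(hlf z).2, (hlf z).1⟩) x n
  apply this.subset
  rintro y ⟨m, hm, hr⟩
  exact ⟨m, hm, rch_flip hr⟩


end Aux

section Main
variable {V : Type*}

lemma ray_rch_ge {E : V → V → Prop} {r : ℕ → V} (h : ∀ i, E (r i) (r (i+1)))
    {a b : ℕ} (hab : a ≤ b) : Rch E (b - a) (r a) (r b) :=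
  ⟨fun i => r (a + i), fun i _ => h (a + i), rfl, congrArg r (Nat.add_sub_cancel' hab)⟩

lemma antiray_rch {E : V → V → Prop} {r : ℕ → V} (h : ∀ i, E (r (i+1)) (r i))
    {a b : ℕ} (hab : a ≤ b) : Rch E (b - a) (r b) (r a) := by
  refine ⟨fun i => r (b - i), fun i hi => ?_, rfl, congrArg r (Nat.sub_sub_self hab)⟩
  have harith : b - (i+1) + 1 = b - i := by omega
  have := h (b - (i+1))
  rw [harith] at this
  exact this

lemma ray_common {E : V → V → Prop} {r : ℕ → V} (h : IsRayD E r ∨ IsAntiRayD E r)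
    (a b : ℕ) : ∃ c, (∃ m, Rch E m (r c) (r a)) ∧ (∃ m, Rch E m (r c) (r b)) := by
  rcases h with ⟨_, h⟩ | ⟨_, h⟩
  · exact ⟨0, ⟨a, by simpa using ray_rch_ge h (Nat.zero_le a)⟩,
      ⟨b, by simpa using ray_rch_ge h (Nat.zero_le b)⟩⟩
  · exact ⟨max a b, ⟨_, antiray_rch h (le_max_left a b)⟩,
      ⟨_, antiray_rch h (le_max_right a b)⟩⟩

lemma path_bounded {E : V → V → Prop} {A B S : Set V} (hS : IsPathFromTo E A B S) :
    ∃ s ∈ A, ∃ n : ℕ, ∀ v ∈ S, ∃ m ≤ n, Rch E m s v := by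
  obtain ⟨n, p, hw, h0, hl, rfl⟩ := hS
  refine ⟨p 0, h0, n, ?_⟩
  rintro v ⟨j, rfl⟩
  refine ⟨j.val, Nat.le_of_lt_succ j.isLt, ?_⟩
  have hr := rch_of_finwalk hw (Nat.le_of_lt_succ j.isLt)
  have e : (⟨j.val, Nat.lt_succ_of_le (Nat.le_of_lt_succ j.isLt)⟩ : Fin (n+1)) = j :=
    Fin.ext rfl
  rw [e] at hr
  exact hr

lemma exists_avoiding {E : V → V → Prop} {r₁ r₂ : ℕ → V}
    (h₁ : IsRayD E r₁ ∨ IsAntiRayD E r₁)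
    (H : ∀ (x : V) (ρ : ℕ), ∃ S : Set V,
        IsPathFromTo E (Set.range r₁) (Set.range r₂) S ∧
        S ∩ (outBallD E x ρ ∪ inBallD E x ρ) = ∅)
    (T : Set V) (hT : ∃ c ρ, ∀ v ∈ T, ∃ m ≤ ρ, Rch E m (r₁ c) v) :
    ∃ S, IsPathFromTo E (Set.range r₁) (Set.range r₂) S ∧ S ∩ T = ∅ ∧
      ∃ c' ρ', ∀ v ∈ T ∪ S, ∃ m ≤ ρ', Rch E m (r₁ c') v := by
  obtain ⟨c, ρ, hcρ⟩ := hT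
  obtain ⟨S, hSpath, hSempty⟩ := H (r₁ c) ρ
  have hST : S ∩ T = ∅ := by
    ext v
    simp only [Set.mem_inter_iff, Set.mem_empty_iff_false, iff_false, not_and]
    intro hvS hvT
    obtain ⟨m, hm, hr⟩ := hcρ v hvT
    have hvB : v ∈ outBallD E (r₁ c) ρ := ddist_le_iff.mpr ⟨m, hm, hr⟩
    have hmem : v ∈ S ∩ (outBallD E (r₁ c) ρ ∪ inBallD E (r₁ c) ρ) := ⟨hvS, Or.inl hvB⟩
    rw [hSempty] at hmem
    exact hmem
  obtain ⟨s, hsA, n, hn⟩ := path_bounded hSpath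
  obtain ⟨i, rfl⟩ := hsA
  obtain ⟨c', ⟨m₁, hm₁⟩, ⟨m₂, hm₂⟩⟩ := ray_common h₁ c i
  refine ⟨S, hSpath, hST, c', max (m₁ + ρ) (m₂ + n), ?_⟩
  rintro v (hv | hv)
  · obtain ⟨m, hm, hr⟩ := hcρ v hv
    exact ⟨m₁ + m, le_trans (by omega) (le_max_left _ _), rch_concat hm₁ hr⟩
  · obtain ⟨m, hm, hr⟩ := hn v hv
    exact ⟨m₂ + m, le_trans (by omega) (le_max_right _ _), rch_concat hm₂ hr⟩

end Main

/-- In a locally finite digraph, for rays or anti-rays `r₁`, `r₂`: there are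
infinitely many pairwise disjoint directed `r₁`-`r₂` paths iff for every vertex `x`
and every radius `ρ` there is a directed `r₁`-`r₂` path avoiding
`B⁺_ρ(x) ∪ B⁻_ρ(x)`. -/
theorem stmt_5 {V : Type*} (E : V → V → Prop)
    (hlf : ∀ x : V, {y : V | E x y}.Finite ∧ {y : V | E y x}.Finite)
    (r₁ r₂ : ℕ → V) (h₁ : IsRayD E r₁ ∨ IsAntiRayD E r₁)
    (h₂ : IsRayD E r₂ ∨ IsAntiRayD E r₂) :
    InfDisjPaths E (Set.range r₁) (Set.range r₂) ↔
      ∀ (x : V) (ρ : ℕ), ∃ S : Set V,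
        IsPathFromTo E (Set.range r₁) (Set.range r₂) S ∧
        S ∩ (outBallD E x ρ ∪ inBallD E x ρ) = ∅ := by
  constructor
  · rintro ⟨F, hF, hdisj⟩ x ρ
    have hfin : (outBallD E x ρ ∪ inBallD E x ρ).Finite := by
      apply Set.Finite.union
      · exact (ball_finite hlf x ρ).subset (fun y hy => ddist_le_iff.mp hy)
      · exact (inball_finite hlf x ρ).subset (fun y hy => ddist_le_iff.mp hy)
    by_contra hc
    push_neg at hc
    have hne : ∀ k, (F k ∩ (outBallD E x ↑ρ ∪ inBallD E x ↑ρ)).Nonempty :=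
      fun k => hc (F k) (hF k)
    choose g hg using hne
    have hinj : Function.Injective g := by
      intro k l hkl
      by_contra hne'
      have h1 := (hg k).1
      rw [hkl] at h1
      exact Set.disjoint_left.mp (hdisj k l hne') h1 (hg l).1
    exact Set.infinite_range_of_injective hinj
      (hfin.subset (by rintro v ⟨k, rfl⟩; exact (hg k).2))
  · intro H
    have key := exists_avoiding h₁ H
    choose! S hS1 hS2 hS3 using key
    let acc : ℕ → Set V := fun n => Nat.rec ∅ (fun _ T => T ∪ S T) n
    have haccd : ∀ n, acc (n+1) = acc n ∪ S (acc n) := fun n => rfl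
    have haccP : ∀ n, ∃ c ρ, ∀ v ∈ acc n, ∃ m ≤ ρ, Rch E m (r₁ c) v := by
      intro n
      induction n with
      | zero => exact ⟨0, 0, fun v hv => absurd hv (Set.notMem_empty v)⟩
      | succ n ih =>
        rw [haccd]
        exact hS3 _ ih
    refine ⟨fun n => S (acc n), fun n => hS1 _ (haccP n), ?_⟩
    have hsub : ∀ k, S (acc k) ⊆ acc (k+1) := fun k => by
      rw [haccd]; exact Set.subset_union_right
    have hmono : ∀ k l, k ≤ l → acc k ⊆ acc l := by
      intro k l hkl
      induction l, hkl using Nat.le_induction with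
      | base => exact subset_rfl
      | succ l hkl ih => exact ih.trans (by rw [haccd]; exact Set.subset_union_left)
    have hdisjacc : ∀ l, S (acc l) ∩ acc l = ∅ := fun l => hS2 _ (haccP l)
    have main : ∀ k l, k < l → Disjoint (S (acc k)) (S (acc l)) := by
      intro k l h
      rw [Set.disjoint_left]
      intro v hvk hvl
      have hv : v ∈ acc l := hmono (k+1) l h (hsub k hvk)
      have hmem : v ∈ S (acc l) ∩ acc l := ⟨hvl, hv⟩
      rw [hdisjacc] at hmem
      exact hmem
    intro k l hkl
    rcases Nat.lt_or_gt_of_ne hkl with h | h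
    · exact main k l h
    · exact (main l k h).symm
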